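/- Assume H1 and H2 and define V(z) = 8∫_z^∞ e^{γ(y)} ∫_y^∞ e^{γ(η)} (∫_η^∞ e^{-γ(ξ)}dξ)² dη dy. Then lim_{z→∞} V(z) / ∫_z^∞ q(y)^{-3} dy = 1. -/

import Mathlib

open MeasureTheory Real Filter Set Topology

lemma tail_split {f : ℝ → ℝ} {a y : ℝ} (hay : a ≤ y) (hf : IntegrableOn f (Set.Ioi a)) :
    ∫ x in Set.Ioi y, f x = (∫ x in Set.Ioi a, f x) - ∫ x in a..y, f x := by
  have h1 : Set.Ioc a y ∪ Set.Ioi y = Set.Ioi a := Set.Ioc_union_Ioi_eq_Ioi hay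
  have h2 := MeasureTheory.setIntegral_union (Set.Ioc_disjoint_Ioi (le_refl y))
    measurableSet_Ioi (hf.mono_set (by rw [← h1]; exact Set.subset_union_left))
    (hf.mono_set (Set.Ioi_subset_Ioi hay)) (μ := volume) (f := f)
  rw [h1] at h2
  rw [intervalIntegral.integral_of_le hay]
  rw [h2]; ring

lemma int_all {f : ℝ → ℝ} (hf : Continuous f) {a : ℝ}
    (hfa : IntegrableOn f (Set.Ioi a)) (y : ℝ) : IntegrableOn f (Set.Ioi y) := by
  rcases le_total a y with h | h
  · exact hfa.mono_set (Set.Ioi_subset_Ioi h)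
  · rw [← Set.Ioc_union_Ioi_eq_Ioi h]
    exact (hf.integrableOn_Ioc).union hfa

lemma tail_tendsto {f : ℝ → ℝ} {a : ℝ} (hf : IntegrableOn f (Set.Ioi a)) :
    Tendsto (fun y => ∫ x in Set.Ioi y, f x) atTop (𝓝 0) := by
  have h := MeasureTheory.intervalIntegral_tendsto_integral_Ioi a hf tendsto_id
  have heq : ∀ᶠ y in atTop, (∫ x in Set.Ioi a, f x) - (∫ x in a..y, f x)
      = ∫ x in Set.Ioi y, f x := by
    filter_upwards [eventually_ge_atTop a] with y hy
    rw [tail_split hy hf]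
  have : Tendsto (fun y => (∫ x in Set.Ioi a, f x) - (∫ x in a..y, f x)) atTop
      (𝓝 ((∫ x in Set.Ioi a, f x) - (∫ x in Set.Ioi a, f x))) := tendsto_const_nhds.sub h
  rw [sub_self] at this
  exact this.congr' heq

lemma tail_hasDeriv {f : ℝ → ℝ} (hf : Continuous f)
    (hint : ∀ y, IntegrableOn f (Set.Ioi y)) (y : ℝ) :
    HasDerivAt (fun z => ∫ x in Set.Ioi z, f x) (-(f y)) y := by
  have heq : ∀ z ∈ Set.Ioi (y - 1), (∫ x in Set.Ioi z, f x)
      = (∫ x in Set.Ioi (y-1), f x) - ∫ x in (y-1)..z, f x :=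
    fun z hz => tail_split (le_of_lt hz) (hint (y-1))
  have hd : HasDerivAt (fun z => (∫ x in Set.Ioi (y-1), f x) - ∫ x in (y-1)..z, f x)
      (-(f y)) y :=
    (intervalIntegral.integral_hasDerivAt_right (hf.intervalIntegrable _ _)
      (hf.stronglyMeasurableAtFilter _ _) hf.continuousAt).const_sub _
  exact hd.congr_of_eventuallyEq
    (eventually_of_mem (Ioi_mem_nhds (by linarith : y - 1 < y)) heq)

lemma tail_mono {f : ℝ → ℝ} {a : ℝ} (hf : IntegrableOn f (Set.Ioi a))
    (hpos : ∀ x, 0 ≤ f x) {y z : ℝ} (hay : a ≤ y) (hyz : y ≤ z) :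
    (∫ x in Set.Ioi z, f x) ≤ ∫ x in Set.Ioi y, f x := by
  apply MeasureTheory.setIntegral_mono_set (hf.mono_set (Set.Ioi_subset_Ioi hay))
    (Filter.Eventually.of_forall hpos)
  exact HasSubset.Subset.eventuallyLE (Set.Ioi_subset_Ioi hyz)

lemma tail_nonneg {f : ℝ → ℝ} (hpos : ∀ x, 0 ≤ f x) (y : ℝ) :
    0 ≤ ∫ x in Set.Ioi y, f x :=
  MeasureTheory.setIntegral_nonneg measurableSet_Ioi (fun x _ => hpos x)

lemma tail_hasDeriv_on {f : ℝ → ℝ} {b : ℝ} (hf : ContinuousOn f (Set.Ioi b))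
    (hint : IntegrableOn f (Set.Ioi b)) {y : ℝ} (hy : b < y) :
    HasDerivAt (fun z => ∫ x in Set.Ioi z, f x) (-(f y)) y := by
  set c := (b + y) / 2 with hc
  have hbc : b < c := by rw [hc]; linarith
  have hcy : c < y := by rw [hc]; linarith
  have hintc : IntegrableOn f (Set.Ioi c) := hint.mono_set (Set.Ioi_subset_Ioi hbc.le)
  have heq : ∀ z ∈ Set.Ioi c, (∫ x in Set.Ioi z, f x)
      = (∫ x in Set.Ioi c, f x) - ∫ x in c..z, f x :=
    fun z hz => tail_split (le_of_lt hz) hintc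
  have hii : IntervalIntegrable f volume c y := by
    apply ContinuousOn.intervalIntegrable
    apply hf.mono
    rw [Set.uIcc_of_le hcy.le]
    intro x hx
    exact lt_of_lt_of_le hbc hx.1
  have hd : HasDerivAt (fun z => (∫ x in Set.Ioi c, f x) - ∫ x in c..z, f x)
      (-(f y)) y :=
    (intervalIntegral.integral_hasDerivAt_right hii
      (hf.stronglyMeasurableAtFilter isOpen_Ioi _ hy)
      (hf.continuousAt (Ioi_mem_nhds hy))).const_sub _
  exact hd.congr_of_eventuallyEq
    (eventually_of_mem (Ioi_mem_nhds hcy) heq)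

/-- Under H1 and H2, with
V(z) = 8∫_z^∞ e^{γ(y)} ∫_y^∞ e^{γ(η)} (∫_η^∞ e^{-γ(ξ)}dξ)² dη dy,
one has V(z)/∫_z^∞ q(y)⁻³ dy → 1. -/
theorem variance_asymptotics
    (q γ : ℝ → ℝ)
    (hq : ContDiff ℝ 1 q)
    (hγ : ∀ y, γ y = 2 * ∫ t in (0:ℝ)..y, q t)
    (H1 : ∫⁻ y in Set.Ioi (0:ℝ),
        ENNReal.ofReal (Real.exp (γ y)) *
          ∫⁻ z in Set.Ioi y, ENNReal.ofReal (Real.exp (-(γ z))) < ⊤)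
    (H2a : Tendsto q atTop atTop)
    (H2b : Tendsto (fun x => deriv q x / q x ^ 2) atTop (nhds 0)) :
    Tendsto
      (fun z =>
        (8 * ∫ y in Set.Ioi z,
            Real.exp (γ y) *
              ∫ η in Set.Ioi y,
                Real.exp (γ η) * (∫ ξ in Set.Ioi η, Real.exp (-(γ ξ))) ^ 2) /
          ∫ y in Set.Ioi z, 1 / q y ^ 3)
      atTop (nhds 1) := by
  -- basic facts
  have hqc : Continuous q := hq.continuous
  have hqd : ∀ y, HasDerivAt q (deriv q y) y := fun y =>
    ((hq.differentiable one_ne_zero) y).hasDerivAt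
  have hγd : ∀ y, HasDerivAt γ (2 * q y) y := by
    intro y
    have h := intervalIntegral.integral_hasDerivAt_right
      (hqc.intervalIntegrable 0 y) (hqc.stronglyMeasurableAtFilter _ _) hqc.continuousAt
    have h2 := HasDerivAt.const_mul (2:ℝ) h
    have : γ = fun y => 2 * ∫ t in (0:ℝ)..y, q t := funext hγ
    rw [this]
    exact h2
  have hγc : Continuous γ := by
    rw [continuous_iff_continuousAt]
    exact fun y => (hγd y).differentiableAt.continuousAt
  -- choose a with q ≥ 1 beyond a
  obtain ⟨a₀, ha₀⟩ := eventually_atTop.1 (H2a.eventually_ge_atTop 1)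
  set a : ℝ := max a₀ 1 with ha_def
  have hq1 : ∀ y, a ≤ y → 1 ≤ q y := fun y hy => ha₀ y (le_trans (le_max_left _ _) hy)
  have ha_pos : 0 < a := lt_of_lt_of_le one_pos (le_max_right _ _)
  -- gamma growth
  have hγgrow : ∀ y, a ≤ y → γ a + 2 * (y - a) ≤ γ y := by
    intro y hy
    have h1 : (∫ t in a..y, (1:ℝ)) ≤ ∫ t in a..y, q t := by
      apply intervalIntegral.integral_mono_on hy intervalIntegrable_const
        (hqc.intervalIntegrable _ _)
      exact fun x hx => hq1 x hx.1
    rw [intervalIntegral.integral_const, smul_eq_mul, mul_one] at h1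
    have h2 : γ y = γ a + 2 * ∫ t in a..y, q t := by
      rw [hγ, hγ, ← intervalIntegral.integral_add_adjacent_intervals
        (hqc.intervalIntegrable 0 a) (hqc.intervalIntegrable a y)]
      ring
    linarith
  have hγtop : Tendsto γ atTop atTop := by
    apply tendsto_atTop_mono' atTop (f₁ := fun y => γ a + 2 * (y - a))
    · filter_upwards [eventually_ge_atTop a] with y hy using hγgrow y hy
    · apply tendsto_atTop_add_const_left
      exact (tendsto_atTop_add_const_right _ _ tendsto_id).const_mul_atTop two_pos
  have hexpneg : Tendsto (fun y => Real.exp (-(γ y))) atTop (𝓝 0) :=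
    Real.tendsto_exp_atBot.comp (tendsto_neg_atTop_atBot.comp hγtop)
  -- integrability of exp(-γ)
  have hcE : Continuous (fun ξ => Real.exp (-(γ ξ))) := Real.continuous_exp.comp hγc.neg
  have hE : IntegrableOn (fun ξ => Real.exp (-(γ ξ))) (Set.Ioi a) := by
    apply Integrable.mono' (g := fun ξ => Real.exp (-(γ a) + 2 * a) * Real.exp (-2 * ξ))
      ((exp_neg_integrableOn_Ioi a two_pos).const_mul _)
      hcE.aestronglyMeasurable
    rw [ae_restrict_iff' measurableSet_Ioi]
    apply Eventually.of_forall
    intro ξ hξ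
    rw [Real.norm_eq_abs, abs_of_pos (Real.exp_pos _), ← Real.exp_add]
    apply Real.exp_le_exp.2
    have := hγgrow ξ (le_of_lt hξ)
    linarith
  have hJint : ∀ y, IntegrableOn (fun ξ => Real.exp (-(γ ξ))) (Set.Ioi y) :=
    int_all hcE hE
  set J : ℝ → ℝ := fun y => ∫ ξ in Set.Ioi y, Real.exp (-(γ ξ)) with hJdef
  have hJd : ∀ y, HasDerivAt J (-(Real.exp (-(γ y)))) y := tail_hasDeriv hcE hJint
  have hJc : Continuous J := by
    rw [continuous_iff_continuousAt]
    exact fun y => (hJd y).differentiableAt.continuousAt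
  have hJ0 : Tendsto J atTop (𝓝 0) := tail_tendsto hE
  have hJpos : ∀ y, 0 < J y := by
    intro y
    rw [hJdef]
    rw [setIntegral_pos_iff_support_of_nonneg_ae
      (Eventually.of_forall (fun ξ => (Real.exp_pos _).le)) (hJint y)]
    have hs : Function.support (fun ξ => Real.exp (-(γ ξ))) ∩ Set.Ioi y = Set.Ioi y := by
      ext x
      simp [Function.support, (Real.exp_pos (-(γ x))).ne']
    rw [hs, Real.volume_Ioi]
    exact ENNReal.zero_lt_top
  have hJnn : ∀ y, 0 ≤ J y := fun y => (hJpos y).le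
  have hJanti : ∀ y z, y ≤ z → J z ≤ J y := fun y z hyz =>
    tail_mono (hJint y) (fun ξ => (Real.exp_pos _).le) le_rfl hyz
  -- integrability of exp(γ) * J from H1
  have hLc : Continuous (fun y => Real.exp (γ y) * J y) :=
    (Real.continuous_exp.comp hγc).mul hJc
  have hLnn : ∀ y, 0 ≤ Real.exp (γ y) * J y :=
    fun y => mul_nonneg (Real.exp_pos _).le (hJnn y)
  have hLint0 : IntegrableOn (fun y => Real.exp (γ y) * J y) (Set.Ioi (0:ℝ)) := by
    constructor
    · exact hLc.aestronglyMeasurable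
    · rw [hasFiniteIntegral_iff_ofReal (Eventually.of_forall hLnn)]
      have hkey : ∀ y : ℝ, ENNReal.ofReal (Real.exp (γ y) * J y)
          = ENNReal.ofReal (Real.exp (γ y)) *
            ∫⁻ z in Set.Ioi y, ENNReal.ofReal (Real.exp (-(γ z))) := by
        intro y
        rw [← MeasureTheory.ofReal_integral_eq_lintegral_ofReal (hJint y)
          (Eventually.of_forall (fun x => (Real.exp_pos _).le))]
        rw [← ENNReal.ofReal_mul (Real.exp_pos _).le]
      rw [lintegral_congr hkey]
      exact H1
  have hLa : IntegrableOn (fun y => Real.exp (γ y) * J y) (Set.Ioi a) :=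
    hLint0.mono_set (Set.Ioi_subset_Ioi ha_pos.le)
  -- Step A : 2 q e^γ J → 1
  set P : ℝ → ℝ := fun y => 2 * q y * Real.exp (γ y) * J y with hPdef
  have hqpos : ∀ᶠ y in atTop, 0 < q y := by
    filter_upwards [eventually_ge_atTop a] with y hy
    exact lt_of_lt_of_le one_pos (hq1 y hy)
  have stepA : Tendsto P atTop (𝓝 1) := by
    have main : Tendsto (fun y => J y / (Real.exp (-(γ y)) / (2 * q y))) atTop (𝓝 1) := by
      apply HasDerivAt.lhopital_zero_atTop
        (f' := fun y => -(Real.exp (-(γ y))))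
        (g' := fun y => -(Real.exp (-(γ y)) * (1 + deriv q y / (2 * q y ^ 2))))
      · exact Eventually.of_forall hJd
      · filter_upwards [hqpos] with y hy
        have h1 : HasDerivAt (fun y => Real.exp (-(γ y)))
            (Real.exp (-(γ y)) * -(2 * q y)) y := ((hγd y).neg).exp
        have h2 : HasDerivAt (fun y => 2 * q y) (2 * deriv q y) y :=
          (hqd y).const_mul 2
        have h3 : HasDerivAt (fun y => Real.exp (-(γ y)) / (2 * q y))
            ((Real.exp (-(γ y)) * -(2 * q y) * (2 * q y) - Real.exp (-(γ y)) * (2 * deriv q y))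
              / (2 * q y) ^ 2) y := h1.div h2 (by positivity)
        convert h3 using 1
        have hq2 : q y ≠ 0 := hy.ne'
        field_simp
        ring
      · filter_upwards [hqpos, NormedAddCommGroup.tendsto_nhds_zero.1 H2b 1 one_pos]
          with y hy hb
        have h4 : (0:ℝ) < 1 + deriv q y / (2 * q y ^ 2) := by
          rw [Real.norm_eq_abs, abs_lt] at hb
          have hrw : deriv q y / (2 * q y ^ 2) = deriv q y / q y ^ 2 / 2 := by ring
          rw [hrw]
          linarith [hb.1]
        have := Real.exp_pos (-(γ y))
        intro hcon
        nlinarith [mul_pos this h4]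
      · exact hJ0
      · exact hexpneg.div_atTop (H2a.const_mul_atTop two_pos)
      · have hlim : Tendsto (fun y => (1 + deriv q y / (2 * q y ^ 2))⁻¹) atTop (𝓝 1) := by
          have h5 : Tendsto (fun y => 1 + deriv q y / (2 * q y ^ 2)) atTop (𝓝 1) := by
            have h6 := H2b.div_const 2
            have h7 : Tendsto (fun y => 1 + deriv q y / q y ^ 2 / 2) atTop (𝓝 (1 + 0/2)) :=
              tendsto_const_nhds.add h6
            norm_num at h7
            exact h7.congr (fun y => by ring)
          have := h5.inv₀ one_ne_zero
          norm_num at this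
          exact this
        apply hlim.congr'
        filter_upwards [hqpos] with y hy
        have he := (Real.exp_pos (-(γ y))).ne'
        rw [neg_div_neg_eq, div_mul_cancel_left₀ he]
    apply main.congr'
    filter_upwards [hqpos] with y hy
    rw [hPdef]
    simp only
    rw [Real.exp_neg]
    have he := (Real.exp_pos (γ y)).ne'
    field_simp
  -- the function K
  have hMc : Continuous (fun η => Real.exp (γ η) * J η ^ 2) :=
    (Real.continuous_exp.comp hγc).mul (hJc.pow 2)
  have hMnn : ∀ η, 0 ≤ Real.exp (γ η) * J η ^ 2 :=
    fun η => mul_nonneg (Real.exp_pos _).le (sq_nonneg _)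
  have hMa : IntegrableOn (fun η => Real.exp (γ η) * J η ^ 2) (Set.Ioi a) := by
    apply Integrable.mono' (g := fun η => J a * (Real.exp (γ η) * J η))
      (hLa.const_mul _) hMc.aestronglyMeasurable
    rw [ae_restrict_iff' measurableSet_Ioi]
    apply Eventually.of_forall
    intro η hη
    rw [Real.norm_eq_abs, abs_of_nonneg (hMnn η)]
    have h1 : J η ≤ J a := hJanti a η (le_of_lt hη)
    have h2 := Real.exp_pos (γ η)
    nlinarith [mul_nonneg (mul_nonneg h2.le (hJnn η)) (sub_nonneg.2 h1)]
  have hMint : ∀ y, IntegrableOn (fun η => Real.exp (γ η) * J η ^ 2) (Set.Ioi y) :=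
    int_all hMc hMa
  set K : ℝ → ℝ := fun y => ∫ η in Set.Ioi y, Real.exp (γ η) * J η ^ 2 with hKdef
  have hKd : ∀ y, HasDerivAt K (-(Real.exp (γ y) * J y ^ 2)) y := tail_hasDeriv hMc hMint
  have hKc : Continuous K := by
    rw [continuous_iff_continuousAt]
    exact fun y => (hKd y).differentiableAt.continuousAt
  have hK0 : Tendsto K atTop (𝓝 0) := tail_tendsto hMa
  have hKnn : ∀ y, 0 ≤ K y := fun y => tail_nonneg hMnn y
  -- bound K y ≤ J y * Ca
  set Ca : ℝ := ∫ x in Set.Ioi a, Real.exp (γ x) * J x with hCadef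
  have hCann : 0 ≤ Ca := tail_nonneg hLnn a
  have hKbound : ∀ y, a ≤ y → K y ≤ J y * Ca := by
    intro y hy
    have hLy : IntegrableOn (fun x => Real.exp (γ x) * J x) (Set.Ioi y) :=
      hLa.mono_set (Set.Ioi_subset_Ioi hy)
    have h1 : K y ≤ ∫ η in Set.Ioi y, (Real.exp (γ η) * J η) * J y := by
      rw [hKdef]
      apply setIntegral_mono_on (hMint y) (hLy.mul_const _) measurableSet_Ioi
      intro η hη
      have h2 : J η ≤ J y := hJanti y η (le_of_lt hη)
      have h3 := Real.exp_pos (γ η)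
      nlinarith [mul_nonneg (mul_nonneg h3.le (hJnn η)) (sub_nonneg.2 h2)]
    rw [integral_mul_const] at h1
    have h4 : (∫ η in Set.Ioi y, Real.exp (γ η) * J η) ≤ Ca :=
      tail_mono hLa hLnn le_rfl hy
    nlinarith [hJnn y]
  -- step B : K ~ e^{2γ} J³
  have hEJ0 : Tendsto (fun y => Real.exp (γ y) * J y) atTop (𝓝 0) := by
    have h1 : Tendsto (fun y => P y / (2 * q y)) atTop (𝓝 0) :=
      stepA.div_atTop (H2a.const_mul_atTop two_pos)
    apply h1.congr'
    filter_upwards [hqpos] with y hy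
    rw [hPdef]
    field_simp
  have hexp2γ : ∀ y : ℝ, Real.exp (2 * γ y) = Real.exp (γ y) * Real.exp (γ y) := by
    intro y
    rw [← Real.exp_add]
    ring_nf
  have stepB : Tendsto (fun z => K z / (Real.exp (2 * γ z) * J z ^ 3)) atTop (𝓝 1) := by
    apply HasDerivAt.lhopital_zero_atTop
      (f' := fun z => -(Real.exp (γ z) * J z ^ 2))
      (g' := fun z => Real.exp (2 * γ z) * (2 * (2 * q z)) * J z ^ 3
        + Real.exp (2 * γ z) * ((3:ℕ) * J z ^ 2 * -(Real.exp (-(γ z)))))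
    · exact Eventually.of_forall hKd
    · apply Eventually.of_forall
      intro z
      have h1 : HasDerivAt (fun z => Real.exp (2 * γ z))
          (Real.exp (2 * γ z) * (2 * (2 * q z))) z := ((hγd z).const_mul 2).exp
      have h2 : HasDerivAt (fun z => J z ^ 3)
          ((3:ℕ) * J z ^ 2 * -(Real.exp (-(γ z)))) z := by
        have := (hJd z).pow 3
        norm_num at this ⊢
        exact this
      exact h1.mul h2
    · filter_upwards [stepA.eventually_lt_const (by norm_num : (1:ℝ) < 5/4)] with z hz
      have hfac : Real.exp (2 * γ z) * (2 * (2 * q z)) * J z ^ 3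
          + Real.exp (2 * γ z) * ((3:ℕ) * J z ^ 2 * -(Real.exp (-(γ z))))
          = Real.exp (γ z) * J z ^ 2 * (2 * P z - 3) := by
        rw [hexp2γ, hPdef, Real.exp_neg]
        have he := (Real.exp_pos (γ z)).ne'
        field_simp
        ring
      rw [hfac]
      have h5 : 2 * P z - 3 < 0 := by linarith
      have h6 : 0 < Real.exp (γ z) * J z ^ 2 :=
        mul_pos (Real.exp_pos _) (pow_pos (hJpos z) 2)
      exact (mul_neg_of_pos_of_neg h6 h5).ne
    · exact hK0
    · have h7 : Tendsto (fun z => (Real.exp (γ z) * J z) * (Real.exp (γ z) * J z) * J z)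
          atTop (𝓝 (0 * 0 * 0)) := (hEJ0.mul hEJ0).mul hJ0
      norm_num at h7
      apply h7.congr
      intro z
      rw [hexp2γ]
      ring
    · have hlim : Tendsto (fun z => -(2 * P z - 3)⁻¹) atTop (𝓝 (-(2 * 1 - 3)⁻¹)) :=
        (((stepA.const_mul 2).sub_const 3).inv₀ (by norm_num)).neg
      norm_num at hlim
      apply hlim.congr'
      filter_upwards [stepA.eventually_lt_const (by norm_num : (1:ℝ) < 5/4)] with z hz
      have hfac : Real.exp (2 * γ z) * (2 * (2 * q z)) * J z ^ 3
          + Real.exp (2 * γ z) * ((3:ℕ) * J z ^ 2 * -(Real.exp (-(γ z))))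
          = Real.exp (γ z) * J z ^ 2 * (2 * P z - 3) := by
        rw [hexp2γ, hPdef, Real.exp_neg]
        have he := (Real.exp_pos (γ z)).ne'
        field_simp
        ring
      rw [hfac]
      have h5 : 2 * P z - 3 < 0 := by linarith
      have h6 : 0 < Real.exp (γ z) * J z ^ 2 :=
        mul_pos (Real.exp_pos _) (pow_pos (hJpos z) 2)
      rw [eq_div_iff (mul_ne_zero h6.ne' h5.ne)]
      field_simp [h5.ne]
  -- the function W (numerator integral)
  have hNc : Continuous (fun y => Real.exp (γ y) * K y) :=
    (Real.continuous_exp.comp hγc).mul hKc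
  have hNnn : ∀ y, 0 ≤ Real.exp (γ y) * K y :=
    fun y => mul_nonneg (Real.exp_pos _).le (hKnn y)
  have hNa : IntegrableOn (fun y => Real.exp (γ y) * K y) (Set.Ioi a) := by
    apply Integrable.mono' (g := fun y => Ca * (Real.exp (γ y) * J y))
      (hLa.const_mul _) hNc.aestronglyMeasurable
    rw [ae_restrict_iff' measurableSet_Ioi]
    apply Eventually.of_forall
    intro y hy
    rw [Real.norm_eq_abs, abs_of_nonneg (hNnn y)]
    have h1 : K y ≤ J y * Ca := hKbound y (le_of_lt hy)
    have h2 := Real.exp_pos (γ y)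
    nlinarith [hKnn y]
  have hNint : ∀ y, IntegrableOn (fun y => Real.exp (γ y) * K y) (Set.Ioi y) :=
    int_all hNc hNa
  set W : ℝ → ℝ := fun z => ∫ y in Set.Ioi z, Real.exp (γ y) * K y with hWdef
  have hWd : ∀ z, HasDerivAt W (-(Real.exp (γ z) * K z)) z := tail_hasDeriv hNc hNint
  have hW0 : Tendsto W atTop (𝓝 0) := tail_tendsto hNa
  -- the denominator
  have hev : ∀ᶠ y in atTop, 1 / q y ^ 3 ≤ 4 * (Real.exp (γ y) * J y) := by
    filter_upwards [stepA.eventually_const_lt (by norm_num : (1:ℝ)/2 < 1),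
      eventually_ge_atTop a] with y h1 h2
    have hq1y : 1 ≤ q y := hq1 y h2
    have hq0 : 0 < q y := lt_of_lt_of_le one_pos hq1y
    have h3 : 1 / q y ^ 3 ≤ 1 / q y := by
      apply one_div_le_one_div_of_le hq0
      nlinarith [mul_nonneg (mul_nonneg hq0.le (sub_nonneg.2 hq1y))
        (show (0:ℝ) ≤ q y + 1 by linarith)]
    have h4 : 1 / q y ≤ 4 * (Real.exp (γ y) * J y) := by
      rw [div_le_iff₀ hq0]
      rw [hPdef] at h1
      simp only at h1
      nlinarith
    linarith
  obtain ⟨b₀, hb₀⟩ := eventually_atTop.1 hev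
  set b : ℝ := max b₀ a with hbdef
  have hba : a ≤ b := le_max_right _ _
  have hbprop : ∀ y, b ≤ y → 1 / q y ^ 3 ≤ 4 * (Real.exp (γ y) * J y) :=
    fun y hy => hb₀ y (le_trans (le_max_left _ _) hy)
  have hqb : ∀ y, b ≤ y → 0 < q y :=
    fun y hy => lt_of_lt_of_le one_pos (hq1 y (le_trans hba hy))
  have hDcont : ContinuousOn (fun y => 1 / q y ^ 3) (Set.Ioi b) := by
    apply ContinuousOn.div continuousOn_const (hqc.continuousOn.pow 3)
    intro y hy
    exact pow_ne_zero 3 (hqb y (le_of_lt hy)).ne'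
  have hDa : IntegrableOn (fun y => 1 / q y ^ 3) (Set.Ioi b) := by
    have hD4 : IntegrableOn (fun y => 4 * (Real.exp (γ y) * J y)) (Set.Ioi a) :=
      hLa.const_mul 4
    apply Integrable.mono' (g := fun y => 4 * (Real.exp (γ y) * J y))
      (hD4.mono_set (Set.Ioi_subset_Ioi hba))
      (hDcont.aestronglyMeasurable measurableSet_Ioi)
    rw [ae_restrict_iff' measurableSet_Ioi]
    apply Eventually.of_forall
    intro y hy
    have hq0 := hqb y (le_of_lt hy)
    rw [Real.norm_eq_abs, abs_of_nonneg (by positivity)]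
    exact hbprop y (le_of_lt hy)
  set D : ℝ → ℝ := fun z => ∫ y in Set.Ioi z, 1 / q y ^ 3 with hDdef
  have hD0 : Tendsto D atTop (𝓝 0) := tail_tendsto hDa
  have hDd : ∀ᶠ z in atTop, HasDerivAt D (-(1 / q z ^ 3)) z := by
    filter_upwards [eventually_gt_atTop b] with z hz
    exact tail_hasDeriv_on hDcont hDa hz
  -- final L'Hopital
  have final : Tendsto (fun z => (8 * W z) / D z) atTop (𝓝 1) := by
    apply HasDerivAt.lhopital_zero_atTop
      (f' := fun z => 8 * -(Real.exp (γ z) * K z))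
      (g' := fun z => -(1 / q z ^ 3))
    · exact Eventually.of_forall (fun z => (hWd z).const_mul 8)
    · exact hDd
    · filter_upwards [hqpos] with z hz
      have : (0:ℝ) < 1 / q z ^ 3 := by positivity
      exact neg_ne_zero.2 this.ne'
    · have := hW0.const_mul (8:ℝ)
      norm_num at this
      exact this
    · exact hD0
    · have hlim : Tendsto (fun z => P z ^ 3 * (K z / (Real.exp (2 * γ z) * J z ^ 3)))
          atTop (𝓝 (1 ^ 3 * 1)) := (stepA.pow 3).mul stepB
      norm_num at hlim
      apply hlim.congr'
      filter_upwards [hqpos] with z hz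
      have hqne := hz.ne'
      have hJne := (hJpos z).ne'
      have hEne := (Real.exp_pos (γ z)).ne'
      rw [hexp2γ, hPdef]
      simp only
      field_simp
      ring
  exact final
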